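/- The number of perfect matchings of the truncated parallelogram CHS(k_1,...,k_m; 1,...,1) with 1 ≤ k_1 ≤ ... ≤ k_m equals the number of non-decreasing integer sequences (a_1,...,a_m) with 0 ≤ a_i ≤ k_i for each i. -/

import Mathlib

open SimpleGraph

/-- `M` is a perfect matching of the graph `G` restricted to the vertex set `A`:
a set of pairwise disjoint edges of `G`, with all endpoints in `A`, covering every
vertex of `A`. -/
def IsPMOn {V : Type*} (G : SimpleGraph V) (A : Set V) (M : Set (Sym2 V)) : Prop :=
  M ⊆ G.edgeSet ∧ (∀ e ∈ M, ∀ v ∈ e, v ∈ A) ∧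
    (M.Pairwise fun e f => ∀ v, v ∈ e → v ∉ f) ∧ (∀ v ∈ A, ∃ e ∈ M, v ∈ e)

/-- `S` is a forcing set of the perfect matching `M` of `G` (restricted to `A`):
`S ⊆ M` and `M` is the unique perfect matching containing `S`. -/
def IsForcingOn {V : Type*} (G : SimpleGraph V) (A : Set V) (M S : Set (Sym2 V)) : Prop :=
  S ⊆ M ∧ ∀ M', IsPMOn G A M' → S ⊆ M' → M' = M

/-- The forcing number of a perfect matching: minimum size of a forcing set. -/
noncomputable def forcingNumOn {V : Type*} (G : SimpleGraph V) (A : Set V)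
    (M : Set (Sym2 V)) : ℕ :=
  sInf {n | ∃ S, IsForcingOn G A M S ∧ S.ncard = n}

/-- Vertices remaining after deleting the endpoints of edges in `S`. -/
def delVerts {V : Type*} (S : Set (Sym2 V)) : Set V := {v | ∀ e ∈ S, v ∉ e}

/-- A closed walk `c` is an `M`-alternating cycle: it is a cycle and its edges
alternate between `M` and its complement (including around the wrap). -/
def IsAltCycle {V : Type*} (G : SimpleGraph V) (M : Set (Sym2 V)) {v : V}
    (c : G.Walk v v) : Prop :=
  c.IsCycle ∧ c.edges.Chain' (fun e f => e ∈ M ↔ f ∉ M) ∧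
    ∀ e f, c.edges.head? = some e → c.edges.getLast? = some f → (f ∈ M ↔ e ∉ M)

/-- The six vertices of the hexagon with bottom-left corner `c` in the
brick-wall representation of the hexagonal lattice. -/
def hexVerts (c : ℤ × ℤ) : Set (ℤ × ℤ) :=
  {(c.1, c.2), (c.1 + 1, c.2), (c.1 + 2, c.2),
   (c.1, c.2 + 1), (c.1 + 1, c.2 + 1), (c.1 + 2, c.2 + 1)}

/-- Adjacency in the brick-wall hexagonal lattice: horizontal neighbours always,
vertical neighbours when the parity condition holds. -/
def brickAdj (u v : ℤ × ℤ) : Prop :=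
  (u.2 = v.2 ∧ (u.1 = v.1 + 1 ∨ v.1 = u.1 + 1)) ∨
    (u.1 = v.1 ∧ ((u.2 = v.2 + 1 ∧ Even (u.1 + v.2)) ∨ (v.2 = u.2 + 1 ∧ Even (u.1 + u.2))))

/-- The hexagonal system determined by a set `H` of hexagon corners: the union of
the corresponding hexagons, as a subgraph of the hexagonal (brick-wall) lattice. -/
def hexGraph (H : Set (ℤ × ℤ)) : SimpleGraph (ℤ × ℤ) :=
  SimpleGraph.fromRel fun u v =>
    brickAdj u v ∧ ∃ c ∈ H, u ∈ hexVerts c ∧ v ∈ hexVerts c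

/-- Vertex set of the hexagonal system with hexagon set `H`. -/
def hexVertexSet (H : Set (ℤ × ℤ)) : Set (ℤ × ℤ) := ⋃ c ∈ H, hexVerts c

/-- Perfect matchings of the hexagonal system with hexagon set `H`. -/
def hexPM (H : Set (ℤ × ℤ)) (M : Set (Sym2 (ℤ × ℤ))) : Prop :=
  IsPMOn (hexGraph H) (hexVertexSet H) M

/-- Forcing number of a perfect matching of a hexagonal system. -/
noncomputable def hexForcingNum (H : Set (ℤ × ℤ)) (M : Set (Sym2 (ℤ × ℤ))) : ℕ :=
  forcingNumOn (hexGraph H) (hexVertexSet H) M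

/-- `hexOmega H i` is the number of perfect matchings with forcing number `i`,
i.e. the coefficient of `x^i` in the forcing polynomial. -/
noncomputable def hexOmega (H : Set (ℤ × ℤ)) (i : ℕ) : ℕ :=
  {M | hexPM H M ∧ hexForcingNum H M = i}.ncard

/-- The truncated parallelogram `CHS(k_1,…,k_m;1,…,1)`. -/
def truncPar (m : ℕ) (k : Fin m → ℕ) : Set (ℤ × ℤ) :=
  {p | ∃ i : Fin m, ∃ j : ℕ, 1 ≤ j ∧ j ≤ k i ∧
    p = (2 * ((j : ℤ) - 1) + (i : ℤ), -(i : ℤ))}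

lemma mem_hexVerts (v c : ℤ × ℤ) :
    v ∈ hexVerts c ↔ (v.2 = c.2 ∨ v.2 = c.2 + 1) ∧
      (v.1 = c.1 ∨ v.1 = c.1 + 1 ∨ v.1 = c.1 + 2) := by
  simp only [hexVerts, Set.mem_insert_iff, Set.mem_singleton_iff, Prod.ext_iff]
  omega

section
variable (m : ℕ) (k : Fin m → ℕ)

/-- Horizontal edge predicate. -/
def isH (u v : ℤ × ℤ) : Prop := ∃ i : Fin m, u.2 = v.2 ∧
  (u.2 = -(i:ℤ) ∨ u.2 = 1 - (i:ℤ)) ∧ v.1 = u.1 + 1 ∧ (i:ℤ) ≤ u.1 ∧ v.1 ≤ (i:ℤ) + 2 * (k i)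

/-- Vertical edge predicate: `u` above `v`. -/
def isV (u v : ℤ × ℤ) : Prop := ∃ i : Fin m, u.1 = v.1 ∧
  u.2 = 1 - (i:ℤ) ∧ v.2 = -(i:ℤ) ∧ ∃ s : ℕ, s ≤ k i ∧ u.1 = (i:ℤ) + 2 * s

lemma mem_vertexSet (hk1 : ∀ i, 1 ≤ k i) (v : ℤ × ℤ) :
    v ∈ hexVertexSet (truncPar m k) ↔ ∃ i : Fin m,
      (i:ℤ) ≤ v.1 ∧ v.1 ≤ (i:ℤ) + 2 * (k i) ∧ (v.2 = -(i:ℤ) ∨ v.2 = 1 - (i:ℤ)) := by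
  simp only [hexVertexSet, Set.mem_iUnion, truncPar, Set.mem_setOf_eq]
  constructor
  · rintro ⟨c, ⟨i, j, hj1, hj2, rfl⟩, hv⟩
    rw [mem_hexVerts] at hv
    refine ⟨i, ?_, ?_, ?_⟩ <;> simp only at hv ⊢ <;> omega
  · rintro ⟨i, h1, h2, h3⟩
    have hki := hk1 i
    set n : ℕ := (v.1 - (i:ℤ)).toNat with hn
    refine ⟨(2 * ((min (k i) (n/2 + 1) : ℤ) - 1) + (i:ℤ), -(i:ℤ)),
      ⟨i, min (k i) (n/2 + 1), ?_, ?_, ?_⟩, ?_⟩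
    · omega
    · omega
    · simp only [Prod.mk.injEq]
      constructor
      · push_cast
        omega
      · trivial
    · rw [mem_hexVerts]
      simp only
      push_cast
      omega

lemma adj_iff (hk1 : ∀ i, 1 ≤ k i) (u v : ℤ × ℤ) :
    (hexGraph (truncPar m k)).Adj u v ↔
      isH m k u v ∨ isH m k v u ∨ isV m k u v ∨ isV m k v u := by
  constructor
  · intro h
    rw [hexGraph, fromRel_adj] at h
    obtain ⟨hne, h⟩ := h
    have main : ∀ a b : ℤ × ℤ, a ≠ b →
        (brickAdj a b ∧ ∃ c ∈ truncPar m k, a ∈ hexVerts c ∧ b ∈ hexVerts c) →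
        isH m k a b ∨ isH m k b a ∨ isV m k a b ∨ isV m k b a := by
      rintro a b hab ⟨hbrick, c, ⟨i, j, hj1, hj2, rfl⟩, hac, hbc⟩
      rw [mem_hexVerts] at hac hbc
      simp only at hac hbc
      rcases hbrick with ⟨hy, hx | hx⟩ | ⟨hx, ⟨hy, hpar⟩ | ⟨hy, hpar⟩⟩
      · -- a.1 = b.1 + 1 : isH b a
        right; left
        exact ⟨i, hy.symm, by omega, by omega, by omega, by omega⟩
      · left
        exact ⟨i, hy, by omega, by omega, by omega, by omega⟩
      · -- a.2 = b.2 + 1 : a above b : isV a b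
        right; right; left
        rw [Int.even_iff] at hpar
        refine ⟨i, hx, by omega, by omega, ((a.1 - (i:ℤ))/2).toNat, by omega, by omega⟩
      · right; right; right
        rw [Int.even_iff] at hpar
        refine ⟨i, hx.symm, by omega, by omega, ((b.1 - (i:ℤ))/2).toNat, by omega, by omega⟩
    rcases h with h | h
    · exact main u v hne h
    · rcases main v u (Ne.symm hne) h with h' | h' | h' | h'
      · exact Or.inr (Or.inl h')
      · exact Or.inl h'
      · exact Or.inr (Or.inr (Or.inr h'))
      · exact Or.inr (Or.inr (Or.inl h'))
  · intro h
    rw [hexGraph, fromRel_adj]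
    have mainH : ∀ a b : ℤ × ℤ, isH m k a b → a ≠ b ∧
        (brickAdj a b ∧ ∃ c ∈ truncPar m k, a ∈ hexVerts c ∧ b ∈ hexVerts c) := by
      rintro a b ⟨i, hy, hlev, hx, h1, h2⟩
      have hki := hk1 i
      set n : ℕ := (a.1 - (i:ℤ)).toNat with hn
      have hne : a ≠ b := by
        intro hh; rw [hh] at hx; omega
      refine ⟨hne, Or.inl ⟨hy, Or.inr hx⟩,
        (2 * ((min (k i) (n/2 + 1) : ℤ) - 1) + (i:ℤ), -(i:ℤ)), ⟨i, min (k i) (n/2+1), by omega, by omega, by simp only [Prod.mk.injEq]; constructor; push_cast; omega; trivial⟩, ?_, ?_⟩ <;>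
        · rw [mem_hexVerts]; simp only; push_cast; omega
    have mainV : ∀ a b : ℤ × ℤ, isV m k a b → a ≠ b ∧
        (brickAdj a b ∧ ∃ c ∈ truncPar m k, a ∈ hexVerts c ∧ b ∈ hexVerts c) := by
      rintro a b ⟨i, hx, hya, hyb, s, hs, hxa⟩
      have hki := hk1 i
      have hne : a ≠ b := by
        intro hh; rw [hh] at hya; omega
      refine ⟨hne, Or.inr ⟨hx, Or.inl ⟨by omega, ?_⟩⟩,
        (2 * ((max 1 s : ℤ) - 1) + (i:ℤ), -(i:ℤ)), ⟨i, max 1 s, by omega, by omega, by simp only [Prod.mk.injEq]; constructor; push_cast; omega; trivial⟩, ?_, ?_⟩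
      · rw [Int.even_iff]; omega
      · rw [mem_hexVerts]; simp only; push_cast; omega
      · rw [mem_hexVerts]; simp only; push_cast; omega
    rcases h with h | h | h | h
    · obtain ⟨hne, hr⟩ := mainH u v h; exact ⟨hne, Or.inl hr⟩
    · obtain ⟨hne, hr⟩ := mainH v u h; exact ⟨Ne.symm hne, Or.inr hr⟩
    · obtain ⟨hne, hr⟩ := mainV u v h; exact ⟨hne, Or.inl hr⟩
    · obtain ⟨hne, hr⟩ := mainV v u h; exact ⟨Ne.symm hne, Or.inr hr⟩

end

def vE (x t : ℤ) : Sym2 (ℤ × ℤ) := s((x, t), (x, t + 1))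
def hE (x t : ℤ) : Sym2 (ℤ × ℤ) := s((x, t), (x + 1, t))

lemma mem_vE (v : ℤ × ℤ) (x t : ℤ) : v ∈ vE x t ↔ v.1 = x ∧ (v.2 = t ∨ v.2 = t + 1) := by
  simp only [vE, Sym2.mem_iff, Prod.ext_iff]
  omega

lemma mem_hE (v : ℤ × ℤ) (x t : ℤ) : v ∈ hE x t ↔ v.2 = t ∧ (v.1 = x ∨ v.1 = x + 1) := by
  simp only [hE, Sym2.mem_iff, Prod.ext_iff]
  omega

lemma vE_inj {x t x' t' : ℤ} (h : vE x t = vE x' t') : x = x' ∧ t = t' := by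
  rw [vE, vE, Sym2.eq_iff] at h
  simp only [Prod.ext_iff] at h
  omega

lemma hE_inj {x t x' t' : ℤ} (h : hE x t = hE x' t') : x = x' ∧ t = t' := by
  rw [hE, hE, Sym2.eq_iff] at h
  simp only [Prod.ext_iff] at h
  omega

lemma vE_congr {x t x' t' : ℤ} (h1 : x = x') (h2 : t = t') : vE x t = vE x' t' := by
  rw [h1, h2]

lemma vE_ne_hE (x t x' t' : ℤ) : vE x t ≠ hE x' t' := by
  rw [vE, hE]
  intro h
  rw [Sym2.eq_iff] at h
  simp only [Prod.ext_iff] at h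
  omega

/-- Top level clause. -/
def HformTop (m : ℕ) (K A : ℤ → ℤ) (t x : ℤ) : Prop :=
  1 ≤ (m:ℤ) ∧ t = 1 ∧ 0 ≤ x ∧ x + 1 ≤ 2 * K 0 ∧
    ((x < 2 * A 0 ∧ x % 2 = 0) ∨ (2 * A 0 < x ∧ (x - 2 * A 0) % 2 = 1))

/-- Interior level clause. -/
def HformInt (m : ℕ) (K A : ℤ → ℤ) (t x : ℤ) : Prop :=
  2 - (m:ℤ) ≤ t ∧ t ≤ 0 ∧ -t ≤ x ∧ x + 1 ≤ (1 - t) + 2 * K (1 - t) ∧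
      ((x < -t + 2 * A (-t) ∧ (x + t) % 2 = 0) ∨
       (-t + 2 * A (-t) < x ∧ x < (1 - t) + 2 * A (1 - t) ∧ (x - (-t + 2 * A (-t))) % 2 = 1) ∨
       ((1 - t) + 2 * A (1 - t) < x ∧ (x - ((1 - t) + 2 * A (1 - t))) % 2 = 1))

/-- Bottom level clause. -/
def HformBot (m : ℕ) (K A : ℤ → ℤ) (t x : ℤ) : Prop :=
  1 ≤ (m:ℤ) ∧ t = 1 - (m:ℤ) ∧ (m:ℤ) - 1 ≤ x ∧ x + 1 ≤ ((m:ℤ) - 1) + 2 * K ((m:ℤ) - 1) ∧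
      ((x < ((m:ℤ) - 1) + 2 * A ((m:ℤ) - 1) ∧ (x - ((m:ℤ) - 1)) % 2 = 0) ∨
       (((m:ℤ) - 1) + 2 * A ((m:ℤ) - 1) < x ∧ (x - (((m:ℤ) - 1) + 2 * A ((m:ℤ) - 1))) % 2 = 1))

/-- The horizontal edges of the canonical matching determined by row data `A`. -/
def Hform (m : ℕ) (K A : ℤ → ℤ) (t x : ℤ) : Prop :=
  HformTop m K A t x ∨ HformInt m K A t x ∨ HformBot m K A t x

/-- The canonical perfect matching determined by row data `A`. -/
def Phi (m : ℕ) (K A : ℤ → ℤ) : Set (Sym2 (ℤ × ℤ)) :=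
  {e | ∃ r : ℤ, 0 ≤ r ∧ r < (m:ℤ) ∧ e = vE (r + 2 * A r) (-r)} ∪
  {e | ∃ t x : ℤ, Hform m K A t x ∧ e = hE x t}

lemma edge_mem_vertexSet {H : Set (ℤ × ℤ)} {e : Sym2 (ℤ × ℤ)}
    (he : e ∈ (hexGraph H).edgeSet) {v : ℤ × ℤ} (hv : v ∈ e) : v ∈ hexVertexSet H := by
  induction e with
  | _ a b =>
    rw [SimpleGraph.mem_edgeSet, hexGraph, SimpleGraph.fromRel_adj] at he
    obtain ⟨-, h | h⟩ := he <;>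
    · obtain ⟨-, c, hc, ha, hb⟩ := h
      rw [Sym2.mem_iff] at hv
      rcases hv with rfl | rfl <;>
        exact Set.mem_biUnion hc (by assumption)

section
variable {m : ℕ} {k : Fin m → ℕ}

lemma hE_edge_iff (hk1 : ∀ i, 1 ≤ k i) (x t : ℤ) :
    hE x t ∈ (hexGraph (truncPar m k)).edgeSet ↔
      ∃ i : Fin m, (t = -(i:ℤ) ∨ t = 1 - (i:ℤ)) ∧ (i:ℤ) ≤ x ∧ x + 1 ≤ (i:ℤ) + 2 * k i := by
  rw [hE, SimpleGraph.mem_edgeSet, adj_iff m k hk1]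
  constructor
  · rintro (⟨i, h1, h2, h3, h4, h5⟩ | ⟨i, h1, h2, h3, h4, h5⟩ |
      ⟨i, h1, h2, h3, s, h4, h5⟩ | ⟨i, h1, h2, h3, s, h4, h5⟩) <;> simp only at *
    · exact ⟨i, by omega, by omega, by omega⟩
    · exact ⟨i, by omega, by omega, by omega⟩
    · omega
    · omega
  · rintro ⟨i, h1, h2, h3⟩
    exact Or.inl ⟨i, rfl, by simpa using h1, rfl, h2, h3⟩

lemma vE_edge_iff (hk1 : ∀ i, 1 ≤ k i) (x t : ℤ) :
    vE x t ∈ (hexGraph (truncPar m k)).edgeSet ↔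
      ∃ i : Fin m, t = -(i:ℤ) ∧ ∃ s : ℕ, s ≤ k i ∧ x = (i:ℤ) + 2 * s := by
  rw [vE, SimpleGraph.mem_edgeSet, adj_iff m k hk1]
  constructor
  · rintro (⟨i, h1, h2, h3, h4, h5⟩ | ⟨i, h1, h2, h3, h4, h5⟩ |
      ⟨i, h1, h2, h3, s, h4, h5⟩ | ⟨i, h1, h2, h3, s, h4, h5⟩) <;> simp only at *
    · omega
    · omega
    · omega
    · exact ⟨i, by omega, s, h4, by omega⟩
  · rintro ⟨i, h1, s, h2, h3⟩
    exact Or.inr (Or.inr (Or.inr ⟨i, rfl, by simp only; omega, by simp only; omega, s, h2,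
      by simp only; omega⟩))

lemma edge_shape (hk1 : ∀ i, 1 ≤ k i) {e : Sym2 (ℤ × ℤ)}
    (he : e ∈ (hexGraph (truncPar m k)).edgeSet) :
    ∃ x t : ℤ, e = hE x t ∨ e = vE x t := by
  induction e with
  | _ a b =>
    rw [SimpleGraph.mem_edgeSet, adj_iff m k hk1] at he
    rcases he with ⟨i, h1, h2, h3, -, -⟩ | ⟨i, h1, h2, h3, -, -⟩ |
      ⟨i, h1, h2, h3, -⟩ | ⟨i, h1, h2, h3, -⟩
    · refine ⟨a.1, a.2, Or.inl ?_⟩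
      rw [hE, Sym2.eq_iff]
      exact Or.inl ⟨rfl, Prod.ext h3 h1.symm⟩
    · refine ⟨b.1, b.2, Or.inl ?_⟩
      rw [hE, Sym2.eq_iff]
      exact Or.inr ⟨Prod.ext h3 h1.symm, Prod.ext rfl rfl⟩
    · refine ⟨a.1, b.2, Or.inr ?_⟩
      rw [vE, Sym2.eq_iff]
      exact Or.inr ⟨Prod.ext rfl (by omega), Prod.ext h1.symm rfl⟩
    · refine ⟨a.1, a.2, Or.inr ?_⟩
      rw [vE, Sym2.eq_iff]
      exact Or.inl ⟨Prod.ext rfl rfl, Prod.ext h1 (by omega)⟩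

end


/-- Forced structure of a matching on an integer path `[L,R]` with possible
"vertical" escapes `d`. -/
theorem pathScan (P d : ℤ → Prop) (L R : ℤ)
    (hPr : ∀ x, P x → L ≤ x ∧ x + 1 ≤ R)
    (hdr : ∀ x, d x → L ≤ x ∧ x ≤ R)
    (hone : ∀ x, L ≤ x → x ≤ R → P x ∨ P (x-1) ∨ d x)
    (he1 : ∀ x, P x → ¬ P (x-1))
    (he2 : ∀ x, P x → ¬ d x)
    (he3 : ∀ x, P x → ¬ d (x+1))
    (hno3 : ∀ w1 w2 w3, d w1 → d w2 → d w3 → w1 < w2 → w2 < w3 →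
      (w1-L) % 2 = 0 → (w2-w1) % 2 = 1 → (w3-w2) % 2 = 1 → False)
    (hLR : L ≤ R) :
    ((∀ w, ¬ d w) ∧ (R-L) % 2 = 1 ∧
        (∀ x, P x ↔ (L ≤ x ∧ x+1 ≤ R ∧ (x-L) % 2 = 0)))
    ∨ (∃ p, d p ∧ (p-L) % 2 = 0 ∧ (R-p) % 2 = 0 ∧ (∀ w, d w → w = p) ∧
        (∀ x, P x ↔ (L ≤ x ∧ x+1 ≤ R ∧
          ((x < p ∧ (x-L) % 2 = 0) ∨ (p < x ∧ (x-p) % 2 = 1)))))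
    ∨ (∃ p q, d p ∧ d q ∧ p < q ∧ (p-L) % 2 = 0 ∧ (q-p) % 2 = 1 ∧ (R-q) % 2 = 0 ∧
        (∀ w, d w → w = p ∨ w = q) ∧
        (∀ x, P x ↔ (L ≤ x ∧ x+1 ≤ R ∧
          ((x < p ∧ (x-L) % 2 = 0) ∨ (p < x ∧ x < q ∧ (x-p) % 2 = 1) ∨
            (q < x ∧ (x-q) % 2 = 1))))) := by
  -- the invariant carried along the scan
  set Inv : ℤ → Prop := fun x =>
    ((∀ w, w ≤ x → ¬ d w) ∧ (∀ y, y ≤ x → (P y ↔ (L ≤ y ∧ (y-L) % 2 = 0))))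
    ∨ (∃ p, d p ∧ p ≤ x ∧ (p-L) % 2 = 0 ∧ (∀ w, d w → w ≤ x → w = p) ∧
        (∀ y, y ≤ x → (P y ↔ (L ≤ y ∧
          ((y < p ∧ (y-L) % 2 = 0) ∨ (p < y ∧ (y-p) % 2 = 1))))))
    ∨ (∃ p q, d p ∧ d q ∧ p < q ∧ q ≤ x ∧ (p-L) % 2 = 0 ∧ (q-p) % 2 = 1 ∧
        (∀ w, d w → w ≤ x → w = p ∨ w = q) ∧
        (∀ y, y ≤ x → (P y ↔ (L ≤ y ∧
          ((y < p ∧ (y-L) % 2 = 0) ∨ (p < y ∧ y < q ∧ (y-p) % 2 = 1) ∨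
            (q < y ∧ (y-q) % 2 = 1)))))) with hInv
  have hPfalse : ∀ y, y < L → ¬ P y := fun y hy hP => by have := hPr y hP; omega
  have hrec : ∀ x, L ≤ x → x ≤ R → (P x ↔ (¬ d x ∧ ¬ P (x-1))) := by
    intro x h1 h2
    constructor
    · intro hP; exact ⟨he2 x hP, he1 x hP⟩
    · rintro ⟨hd, hp⟩
      rcases hone x h1 h2 with h | h | h
      · exact h
      · exact absurd h hp
      · exact absurd h hd
  have key : ∀ n : ℕ, ∀ x, x = L + n → x ≤ R → Inv x := by
    intro n
    induction n with
    | zero =>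
      intro x hx hxR
      rw [show x = L by omega] at hxR ⊢
      have hiff := hrec L le_rfl hxR
      by_cases hd : d L
      · right; left
        refine ⟨L, hd, le_rfl, by omega, ?_, ?_⟩
        · intro w hw hwL
          have := (hdr w hw).1; omega
        · intro y hy
          rcases lt_or_eq_of_le hy with hy' | hy'
          · constructor
            · intro h; exact absurd h (hPfalse y hy')
            · intro h; omega
          · subst hy'
            have : ¬ P y := by
              intro hP; exact he2 y hP hd
            constructor
            · intro h; exact absurd h this
            · intro h; omega
      · have hP : P L := by
          rw [hiff]
          exact ⟨hd, hPfalse (L-1) (by omega)⟩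
        left
        refine ⟨?_, ?_⟩
        · intro w hw hdw
          have := (hdr w hdw).1
          have : w = L := by omega
          subst this; exact hd hdw
        · intro y hy
          rcases lt_or_eq_of_le hy with hy' | hy'
          · constructor
            · intro h; exact absurd h (hPfalse y hy')
            · intro h; omega
          · subst hy'
            constructor
            · intro _; exact ⟨le_rfl, by omega⟩
            · intro _; exact hP
    | succ n ih =>
      intro x hx hxR
      have hInvPrev : Inv (x - 1) := ih (x-1) (by omega) (by omega)
      have hxL : L ≤ x := by omega
      have hiff := hrec x hxL hxR
      rw [hInv] at hInvPrev ⊢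
      by_cases hdx : d x
      · -- vertical at x : state advances
        have hnPx : ¬ P x := fun h => he2 x h hdx
        have hnPx1 : ¬ P (x-1) := fun h => he3 (x-1) h (by simpa using hdx)
        rcases hInvPrev with ⟨hnd, hform⟩ | ⟨p, hdp, hpx, hpe, huni, hform⟩ |
          ⟨p, q, hdp, hdq, hpq, hqx, hpe, hqo, huni, hform⟩
        · -- first vertical found
          right; left
          have hxLe : (x - L) % 2 = 0 := by
            by_cases hxeq : x = L
            · omega
            · have := (hform (x-1) (by omega)).mpr
              have hx1L : L ≤ x - 1 := by omega
              by_contra hodd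
              exact hnPx1 (this ⟨hx1L, by omega⟩)
          refine ⟨x, hdx, le_rfl, hxLe, ?_, ?_⟩
          · intro w hw hwx
            rcases lt_or_eq_of_le hwx with h | h
            · exact absurd hw (hnd w (by omega))
            · exact h
          · intro y hy
            rcases lt_or_eq_of_le hy with hy' | hy'
            · rw [hform y (by omega)]
              constructor
              · rintro ⟨h1, h2⟩; exact ⟨h1, Or.inl ⟨hy', h2⟩⟩
              · rintro ⟨h1, h2 | h2⟩
                · exact ⟨h1, h2.2⟩
                · omega
            · subst hy'
              constructor
              · intro h; exact absurd h hnPx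
              · intro h; omega
        · -- second vertical found
          right; right
          have hpx' : p < x := by
            rcases lt_or_eq_of_le hpx with h | h
            · omega
            · subst h; omega
          have hxo : (x - p) % 2 = 1 := by
            have := (hform (x-1) (by omega)).mpr
            by_contra heven
            have hx1p : p ≤ x - 1 := by omega
            rcases lt_or_eq_of_le hx1p with h | h
            · exact hnPx1 (this ⟨by have := (hdr p hdp).1; omega, Or.inr ⟨h, by omega⟩⟩)
            · -- x - 1 = p, so x = p + 1, (x-p)%2 = 1, contradiction with heven
              omega
          refine ⟨p, x, hdp, hdx, hpx', le_rfl, hpe, hxo, ?_, ?_⟩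
          · intro w hw hwx
            rcases lt_or_eq_of_le hwx with h | h
            · exact Or.inl (huni w hw (by omega))
            · exact Or.inr h
          · intro y hy
            rcases lt_or_eq_of_le hy with hy' | hy'
            · rw [hform y (by omega)]
              constructor
              · rintro ⟨h1, h2 | h2⟩
                · exact ⟨h1, Or.inl h2⟩
                · exact ⟨h1, Or.inr (Or.inl ⟨h2.1, hy', h2.2⟩)⟩
              · rintro ⟨h1, h2 | h2 | h2⟩
                · exact ⟨h1, Or.inl h2⟩
                · exact ⟨h1, Or.inr ⟨h2.1, h2.2.2⟩⟩
                · omega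
            · subst hy'
              constructor
              · intro h; exact absurd h hnPx
              · intro h; omega
        · -- third vertical : impossible
          exfalso
          have hqx' : q < x := by omega
          have hxq : (x - q) % 2 = 1 := by
            have := (hform (x-1) (by omega)).mpr
            by_contra heven
            have hx1q : q ≤ x - 1 := by omega
            rcases lt_or_eq_of_le hx1q with h | h
            · exact hnPx1 (this ⟨by have := (hdr p hdp).1; omega,
                Or.inr (Or.inr ⟨h, by omega⟩)⟩)
            · omega
          exact hno3 p q x hdp hdq hdx hpq hqx' hpe hqo hxq
      · -- no vertical at x : state preserved, P x flips
        rcases hInvPrev with ⟨hnd, hform⟩ | ⟨p, hdp, hpx, hpe, huni, hform⟩ |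
          ⟨p, q, hdp, hdq, hpq, hqx, hpe, hqo, huni, hform⟩
        · left
          refine ⟨fun w hw => by
            rcases lt_or_eq_of_le hw with h | h
            · exact hnd w (by omega)
            · subst h; exact hdx, ?_⟩
          intro y hy
          rcases lt_or_eq_of_le hy with hy' | hy'
          · exact hform y (by omega)
          · subst hy'
            rw [hiff, hform (y-1) (by omega)]
            constructor
            · rintro ⟨_, h⟩
              refine ⟨hxL, ?_⟩
              by_contra hodd
              exact h ⟨by omega, by omega⟩
            · rintro ⟨h1, h2⟩
              exact ⟨hdx, fun h => by omega⟩
        · right; left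
          refine ⟨p, hdp, by omega, hpe, fun w hw hwx => by
            rcases lt_or_eq_of_le hwx with h | h
            · exact huni w hw (by omega)
            · subst h; exact absurd hw hdx, ?_⟩
          intro y hy
          rcases lt_or_eq_of_le hy with hy' | hy'
          · exact hform y (by omega)
          · subst hy'
            rw [hiff, hform (y-1) (by omega)]
            constructor
            · rintro ⟨_, h⟩
              refine ⟨hxL, ?_⟩
              have hyp : y ≠ p := fun hh => hdx (hh ▸ hdp)
              by_contra hbad
              push_neg at hbad
              -- y is not matched: show P (y-1) should hold giving contradiction
              apply h
              constructor
              · omega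
              · by_cases hyltp : y - 1 < p
                · left
                  constructor
                  · exact hyltp
                  · -- since y position fails formula: y < p (as y-1<p, y≠p, if y>p then y-1≥p)
                    omega
                · right
                  constructor
                  · omega
                  · omega
            · rintro ⟨h1, h2⟩
              refine ⟨hdx, fun h => ?_⟩
              rcases h with ⟨_, hh⟩
              omega
        · right; right
          refine ⟨p, q, hdp, hdq, hpq, by omega, hpe, hqo, fun w hw hwx => by
            rcases lt_or_eq_of_le hwx with h | h
            · exact huni w hw (by omega)
            · subst h; exact absurd hw hdx, ?_⟩
          intro y hy
          rcases lt_or_eq_of_le hy with hy' | hy'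
          · exact hform y (by omega)
          · subst hy'
            rw [hiff, hform (y-1) (by omega)]
            have hyp : y ≠ p := fun hh => hdx (hh ▸ hdp)
            have hyq : y ≠ q := fun hh => hdx (hh ▸ hdq)
            constructor
            · rintro ⟨_, h⟩
              refine ⟨hxL, ?_⟩
              by_contra hbad
              push_neg at hbad
              apply h
              refine ⟨by omega, ?_⟩
              omega
            · rintro ⟨h1, h2⟩
              refine ⟨hdx, fun h => ?_⟩
              rcases h with ⟨_, hh⟩
              omega
  -- conclude at x = R
  have hfin : Inv R := key (R - L).toNat R (by omega) le_rfl
  have hnPR : ¬ P R := fun h => by have := hPr R h; omega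
  rw [hInv] at hfin
  rcases hfin with ⟨hnd, hform⟩ | ⟨p, hdp, hpR, hpe, huni, hform⟩ |
    ⟨p, q, hdp, hdq, hpq, hqR, hpe, hqo, huni, hform⟩
  · left
    have hRodd : (R - L) % 2 = 1 := by
      by_contra h
      exact hnPR ((hform R le_rfl).mpr ⟨hLR, by omega⟩)
    refine ⟨fun w hw => hnd w (hdr w hw).2 hw, hRodd, ?_⟩
    intro x
    by_cases hx : x ≤ R
    · rw [hform x hx]
      constructor
      · rintro ⟨h1, h2⟩
        refine ⟨h1, ?_, h2⟩
        rcases lt_or_eq_of_le hx with h | h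
        · omega
        · subst h; omega
      · rintro ⟨h1, h2, h3⟩; exact ⟨h1, h3⟩
    · constructor
      · intro h; have := hPr x h; omega
      · intro h; omega
  · right; left
    have hRe : (R - p) % 2 = 0 := by
      by_contra h
      exact hnPR ((hform R le_rfl).mpr ⟨hLR, Or.inr ⟨by omega, by omega⟩⟩)
    refine ⟨p, hdp, hpe, hRe, fun w hw => huni w hw (hdr w hw).2, ?_⟩
    intro x
    by_cases hx : x ≤ R
    · rw [hform x hx]
      constructor
      · rintro ⟨h1, h2⟩
        refine ⟨h1, ?_, h2⟩
        rcases lt_or_eq_of_le hx with h | h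
        · omega
        · subst h; omega
      · rintro ⟨h1, h2, h3⟩; exact ⟨h1, h3⟩
    · constructor
      · intro h; have := hPr x h; omega
      · intro h; omega
  · right; right
    have hRe : (R - q) % 2 = 0 := by
      by_contra h
      exact hnPR ((hform R le_rfl).mpr ⟨hLR, Or.inr (Or.inr ⟨by omega, by omega⟩)⟩)
    refine ⟨p, q, hdp, hdq, hpq, hpe, hqo, hRe, fun w hw => huni w hw (hdr w hw).2, ?_⟩
    intro x
    by_cases hx : x ≤ R
    · rw [hform x hx]
      constructor
      · rintro ⟨h1, h2⟩
        refine ⟨h1, ?_, h2⟩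
        rcases lt_or_eq_of_le hx with h | h
        · omega
        · subst h; omega
      · rintro ⟨h1, h2, h3⟩; exact ⟨h1, h3⟩
    · constructor
      · intro h; have := hPr x h; omega
      · intro h; omega

section
variable {m : ℕ} {k : Fin m → ℕ} {K A : ℤ → ℤ}

lemma toFin {r : ℤ} (h0 : 0 ≤ r) (h1 : r < (m:ℤ)) : ∃ i : Fin m, (i:ℤ) = r :=
  ⟨⟨r.toNat, by omega⟩, by simp; omega⟩

/-- A vertical edge of `Phi` cannot meet a horizontal edge of `Phi`. -/
lemma phi_VH (hbZ : ∀ r : ℤ, 0 ≤ r → r < (m:ℤ) → 0 ≤ A r ∧ A r ≤ K r ∧ 1 ≤ K r)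
    (hmoZ : ∀ r r' : ℤ, 0 ≤ r → r' = r + 1 → r' < (m:ℤ) → K r ≤ K r' ∧ A r ≤ A r')
    {r x t : ℤ} (h0 : 0 ≤ r) (h1 : r < (m:ℤ)) (hf : Hform m K A t x)
    (ht : t = -r ∨ t = 1 - r) (hx : r + 2 * A r = x ∨ r + 2 * A r = x + 1) : False := by
  rw [Hform, HformTop, HformInt, HformBot] at hf
  rcases hf with ⟨hm, ht1, hf⟩ | ⟨hg1, hg2, hf⟩ | ⟨hm, ht1, hf⟩
  · -- top level : t = 1, row must be 0
    have hr : r = 0 := by omega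
    rw [hr] at hx
    omega
  · -- interior level
    have hb1 := hbZ (-t) (by omega) (by omega)
    have hb2 := hbZ (1-t) (by omega) (by omega)
    have hmo := hmoZ (-t) (1-t) (by omega) (by omega) (by omega)
    rcases ht with ht | ht
    · have hr : r = -t := by omega
      rw [hr] at hx
      omega
    · have hr : r = 1 - t := by omega
      rw [hr] at hx
      omega
  · -- bottom level : row must be m-1
    have hr : r = (m:ℤ) - 1 := by omega
    rw [hr] at hx
    omega

/-- Two horizontal edges of `Phi` at the same level cannot be adjacent. -/
lemma phi_HH (hbZ : ∀ r : ℤ, 0 ≤ r → r < (m:ℤ) → 0 ≤ A r ∧ A r ≤ K r ∧ 1 ≤ K r)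
    (hmoZ : ∀ r r' : ℤ, 0 ≤ r → r' = r + 1 → r' < (m:ℤ) → K r ≤ K r' ∧ A r ≤ A r')
    {t x : ℤ} (h1 : Hform m K A t x) (h2 : Hform m K A t (x+1)) : False := by
  rw [Hform, HformTop, HformInt, HformBot] at h1 h2
  rcases h1 with ⟨hm, ht1, h1⟩ | ⟨hg1, hg2, h1⟩ | ⟨hm, ht1, h1⟩ <;>
    rcases h2 with ⟨hm', ht1', h2⟩ | ⟨hg1', hg2', h2⟩ | ⟨hm', ht1', h2⟩
  · omega
  · omega
  · omega
  · omega
  · have hb1 := hbZ (-t) (by omega) (by omega)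
    have hb2 := hbZ (1-t) (by omega) (by omega)
    have hmo := hmoZ (-t) (1-t) (by omega) (by omega) (by omega)
    omega
  · omega
  · omega
  · omega
  · omega

lemma phi_sub (hk1 : ∀ i, 1 ≤ k i) (hK : ∀ i : Fin m, K (i:ℤ) = (k i : ℤ))
    (hbZ : ∀ r : ℤ, 0 ≤ r → r < (m:ℤ) → 0 ≤ A r ∧ A r ≤ K r ∧ 1 ≤ K r) :
    Phi m K A ⊆ (hexGraph (truncPar m k)).edgeSet := by
  rintro e (⟨r, h0, h1, rfl⟩ | ⟨t, x, hf, rfl⟩)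
  · rw [vE_edge_iff hk1]
    obtain ⟨i, hi⟩ := toFin (m := m) h0 h1
    have hKi := hK i
    rw [hi] at hKi
    have hb := hbZ r h0 h1
    refine ⟨i, ?_, (A r).toNat, ?_, ?_⟩ <;> omega
  · rw [hE_edge_iff hk1]
    rw [Hform, HformTop, HformInt, HformBot] at hf
    rcases hf with ⟨hm, ht1, hf⟩ | ⟨hg1, hg2, hf⟩ | ⟨hm, ht1, hf⟩
    · obtain ⟨i, hi⟩ := toFin (m := m) (r := 0) (le_refl (0:ℤ)) (by omega)
      have hKi := hK i
      rw [hi] at hKi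
      refine ⟨i, ?_, ?_, ?_⟩ <;> omega
    · by_cases hx : (1 : ℤ) - t ≤ x
      · obtain ⟨i, hi⟩ := toFin (m := m) (r := 1 - t) (by omega) (by omega)
        have hKi := hK i
        rw [hi] at hKi
        refine ⟨i, ?_, ?_, ?_⟩ <;> omega
      · obtain ⟨i, hi⟩ := toFin (m := m) (r := -t) (by omega) (by omega)
        have hKi := hK i
        rw [hi] at hKi
        have hb := hbZ (-t) (by omega) (by omega)
        refine ⟨i, ?_, ?_, ?_⟩ <;> omega
    · obtain ⟨i, hi⟩ := toFin (m := m) (r := (m:ℤ) - 1) (by omega) (by omega)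
      have hKi := hK i
      rw [hi] at hKi
      refine ⟨i, ?_, ?_, ?_⟩ <;> omega

lemma phi_pairwise (hbZ : ∀ r : ℤ, 0 ≤ r → r < (m:ℤ) → 0 ≤ A r ∧ A r ≤ K r ∧ 1 ≤ K r)
    (hmoZ : ∀ r r' : ℤ, 0 ≤ r → r' = r + 1 → r' < (m:ℤ) → K r ≤ K r' ∧ A r ≤ A r') :
    (Phi m K A).Pairwise fun e f => ∀ v, v ∈ e → v ∉ f := by
  rintro e he f hf hne v hve hvf
  rcases he with ⟨r, h0, h1, rfl⟩ | ⟨t, x, hfo, rfl⟩ <;>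
    rcases hf with ⟨r', h0', h1', rfl⟩ | ⟨t', x', hfo', rfl⟩
  · -- V V
    rw [mem_vE] at hve hvf
    by_cases hrr : r = r'
    · exact hne (by rw [hrr])
    · omega
  · -- V H
    rw [mem_vE] at hve
    rw [mem_hE] at hvf
    exact phi_VH hbZ hmoZ h0 h1 hfo' (by omega) (by omega)
  · -- H V
    rw [mem_hE] at hve
    rw [mem_vE] at hvf
    exact phi_VH hbZ hmoZ h0' h1' hfo (by omega) (by omega)
  · -- H H
    rw [mem_hE] at hve hvf
    have htt : t = t' := by omega
    subst htt
    by_cases hxx : x = x'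
    · exact hne (by rw [hxx])
    · rcases (by omega : x' = x + 1 ∨ x = x' + 1) with h | h
      · subst h; exact phi_HH hbZ hmoZ hfo hfo'
      · subst h; exact phi_HH hbZ hmoZ hfo' hfo

set_option maxHeartbeats 1000000 in
lemma phi_cover (hk1 : ∀ i, 1 ≤ k i) (hK : ∀ i : Fin m, K (i:ℤ) = (k i : ℤ))
    (hbZ : ∀ r : ℤ, 0 ≤ r → r < (m:ℤ) → 0 ≤ A r ∧ A r ≤ K r ∧ 1 ≤ K r)
    (hmoZ : ∀ r r' : ℤ, 0 ≤ r → r' = r + 1 → r' < (m:ℤ) → K r ≤ K r' ∧ A r ≤ A r') :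
    ∀ v ∈ hexVertexSet (truncPar m k), ∃ e ∈ Phi m K A, v ∈ e := by
  intro v hv
  rw [mem_vertexSet m k hk1] at hv
  obtain ⟨i, hvl, hvr, hlev⟩ := hv
  have hKi := hK i
  have h0 : (0:ℤ) ≤ (i:ℤ) := by positivity
  have h1 : ((i:ℤ)) < (m:ℤ) := by exact_mod_cast i.isLt
  have hbi := hbZ (i:ℤ) h0 h1
  -- the case of a vertex on level t, in a row r with r = -t or r = 1 - t
  rcases hlev with hlev | hlev
  · -- v.2 = -i : row i is above level t = v.2
    have hr : (i:ℤ) = -v.2 := by omega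
    rw [hr] at hvl hvr hKi hbi
    by_cases hp : v.1 = -v.2 + 2 * A (-v.2)
    · refine ⟨vE (-v.2 + 2 * A (-v.2)) (-(-v.2)), Or.inl ⟨-v.2, by omega, by omega, rfl⟩, ?_⟩
      rw [mem_vE]; omega
    · by_cases hcase : (i:ℤ) = (m:ℤ) - 1
      · -- bottom level
        rw [hr] at hcase
        have hform : HformBot m K A v.2 v.1 ∨ HformBot m K A v.2 (v.1 - 1) := by
          rw [HformBot, HformBot]
          rw [show (m:ℤ) - 1 = -v.2 by omega]
          omega
        rcases hform with h | h
        · exact ⟨hE v.1 v.2, Or.inr ⟨v.2, v.1, Or.inr (Or.inr h), rfl⟩, by rw [mem_hE]; omega⟩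
        · exact ⟨hE (v.1 - 1) v.2, Or.inr ⟨v.2, v.1 - 1, Or.inr (Or.inr h), rfl⟩,
            by rw [mem_hE]; omega⟩
      · -- interior level, rows -t and 1 - t = -t + 1
        rw [hr] at hcase
        have hb2 := hbZ (1 - v.2) (by omega) (by omega)
        have hmo := hmoZ (-v.2) (1 - v.2) (by omega) (by omega) (by omega)
        by_cases hq : v.1 = 1 - v.2 + 2 * A (1 - v.2)
        · refine ⟨vE (1 - v.2 + 2 * A (1 - v.2)) (-(1 - v.2)),
            Or.inl ⟨1 - v.2, by omega, by omega, rfl⟩, ?_⟩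
          rw [mem_vE]; omega
        · have hform : HformInt m K A v.2 v.1 ∨ HformInt m K A v.2 (v.1 - 1) := by
            rw [HformInt, HformInt]
            omega
          rcases hform with h | h
          · exact ⟨hE v.1 v.2, Or.inr ⟨v.2, v.1, Or.inr (Or.inl h), rfl⟩, by rw [mem_hE]; omega⟩
          · exact ⟨hE (v.1 - 1) v.2, Or.inr ⟨v.2, v.1 - 1, Or.inr (Or.inl h), rfl⟩,
              by rw [mem_hE]; omega⟩
  · -- v.2 = 1 - i : row i is below level t = v.2
    have hr : (i:ℤ) = 1 - v.2 := by omega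
    rw [hr] at hvl hvr hKi hbi
    by_cases hq : v.1 = 1 - v.2 + 2 * A (1 - v.2)
    · refine ⟨vE (1 - v.2 + 2 * A (1 - v.2)) (-(1 - v.2)),
        Or.inl ⟨1 - v.2, by omega, by omega, rfl⟩, ?_⟩
      rw [mem_vE]; omega
    · by_cases hcase : (i:ℤ) = 0
      · -- top level: t = 1
        rw [hr] at hcase
        have hform : HformTop m K A v.2 v.1 ∨ HformTop m K A v.2 (v.1 - 1) := by
          rw [HformTop, HformTop]
          rw [show (0:ℤ) = 1 - v.2 by omega]
          omega
        rcases hform with h | h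
        · exact ⟨hE v.1 v.2, Or.inr ⟨v.2, v.1, Or.inl h, rfl⟩, by rw [mem_hE]; omega⟩
        · exact ⟨hE (v.1 - 1) v.2, Or.inr ⟨v.2, v.1 - 1, Or.inl h, rfl⟩, by rw [mem_hE]; omega⟩
      · -- interior level: rows -t = (1-t) - 1 and 1 - t
        rw [hr] at hcase
        have hb2 := hbZ (-v.2) (by omega) (by omega)
        have hmo := hmoZ (-v.2) (1 - v.2) (by omega) (by omega) (by omega)
        by_cases hp : v.1 = -v.2 + 2 * A (-v.2)
        · refine ⟨vE (-v.2 + 2 * A (-v.2)) (-(-v.2)), Or.inl ⟨-v.2, by omega, by omega, rfl⟩, ?_⟩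
          rw [mem_vE]; omega
        · have hform : HformInt m K A v.2 v.1 ∨ HformInt m K A v.2 (v.1 - 1) := by
            rw [HformInt, HformInt]
            omega
          rcases hform with h | h
          · exact ⟨hE v.1 v.2, Or.inr ⟨v.2, v.1, Or.inr (Or.inl h), rfl⟩, by rw [mem_hE]; omega⟩
          · exact ⟨hE (v.1 - 1) v.2, Or.inr ⟨v.2, v.1 - 1, Or.inr (Or.inl h), rfl⟩,
              by rw [mem_hE]; omega⟩

lemma phi_PM (hk1 : ∀ i, 1 ≤ k i) (hK : ∀ i : Fin m, K (i:ℤ) = (k i : ℤ))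
    (hbZ : ∀ r : ℤ, 0 ≤ r → r < (m:ℤ) → 0 ≤ A r ∧ A r ≤ K r ∧ 1 ≤ K r)
    (hmoZ : ∀ r r' : ℤ, 0 ≤ r → r' = r + 1 → r' < (m:ℤ) → K r ≤ K r' ∧ A r ≤ A r') :
    IsPMOn (hexGraph (truncPar m k)) (hexVertexSet (truncPar m k)) (Phi m K A) := by
  refine ⟨phi_sub hk1 hK hbZ, ?_, phi_pairwise hbZ hmoZ, phi_cover hk1 hK hbZ hmoZ⟩
  intro e he v hv
  exact edge_mem_vertexSet (phi_sub hk1 hK hbZ he) hv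

end

section
variable {m : ℕ} {k : Fin m → ℕ} {K : ℤ → ℤ} {M : Set (Sym2 (ℤ × ℤ))}

/-- Candidate columns for vertical edges in `M`. -/
lemma dcand (hk1 : ∀ i, 1 ≤ k i) (hK : ∀ i : Fin m, K (i:ℤ) = (k i : ℤ))
    (hsub : M ⊆ (hexGraph (truncPar m k)).edgeSet) {x t : ℤ} (h : vE x t ∈ M) :
    ∃ r s : ℤ, r = -t ∧ 0 ≤ r ∧ r < (m:ℤ) ∧ 0 ≤ s ∧ s ≤ K r ∧ x = r + 2 * s := by
  have := hsub h
  rw [vE_edge_iff hk1] at this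
  obtain ⟨i, ht, s, hs, hx⟩ := this
  have hKi := hK i
  have h0 : (0:ℤ) ≤ (i:ℤ) := by positivity
  have h1 : ((i:ℤ)) < (m:ℤ) := by exact_mod_cast i.isLt
  refine ⟨(i:ℤ), (s:ℤ), by omega, h0, h1, by omega, by omega, by omega⟩

/-- Range restriction on horizontal edges in `M`. -/
lemma prange (hk1 : ∀ i, 1 ≤ k i) (hK : ∀ i : Fin m, K (i:ℤ) = (k i : ℤ))
    (hsub : M ⊆ (hexGraph (truncPar m k)).edgeSet) {x t : ℤ} (h : hE x t ∈ M) :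
    ∃ r : ℤ, (r = -t ∨ r = 1 - t) ∧ 0 ≤ r ∧ r < (m:ℤ) ∧ r ≤ x ∧ x + 1 ≤ r + 2 * K r := by
  have := hsub h
  rw [hE_edge_iff hk1] at this
  obtain ⟨i, ht, hx1, hx2⟩ := this
  have hKi := hK i
  have h0 : (0:ℤ) ≤ (i:ℤ) := by positivity
  have h1 : ((i:ℤ)) < (m:ℤ) := by exact_mod_cast i.isLt
  exact ⟨(i:ℤ), by omega, h0, h1, by omega, by omega⟩

lemma he1' (hpw : M.Pairwise fun e f => ∀ v, v ∈ e → v ∉ f) {x t : ℤ}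
    (h1 : hE x t ∈ M) (h2 : hE (x-1) t ∈ M) : False := by
  have hne : hE x t ≠ hE (x-1) t := fun h => by have := hE_inj h; omega
  exact hpw h1 h2 hne (x, t) (by rw [mem_hE]; omega) (by rw [mem_hE]; omega)

lemma he2' (hpw : M.Pairwise fun e f => ∀ v, v ∈ e → v ∉ f) {x t t' : ℤ}
    (h1 : hE x t ∈ M) (ht : t' = t ∨ t' + 1 = t) (h2 : vE x t' ∈ M) : False :=
  hpw h2 h1 (vE_ne_hE x t' x t) (x, t) (by rw [mem_vE]; omega) (by rw [mem_hE]; omega)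

lemma he3' (hpw : M.Pairwise fun e f => ∀ v, v ∈ e → v ∉ f) {x t t' : ℤ}
    (h1 : hE x t ∈ M) (ht : t' = t ∨ t' + 1 = t) (h2 : vE (x+1) t' ∈ M) : False :=
  hpw h2 h1 (vE_ne_hE (x+1) t' x t) (x+1, t) (by rw [mem_vE]; omega) (by rw [mem_hE]; omega)

lemma cover_shape (hk1 : ∀ i, 1 ≤ k i)
    (hsub : M ⊆ (hexGraph (truncPar m k)).edgeSet)
    (hcov : ∀ v ∈ hexVertexSet (truncPar m k), ∃ e ∈ M, v ∈ e)
    {x t : ℤ} (h : (x, t) ∈ hexVertexSet (truncPar m k)) :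
    hE x t ∈ M ∨ hE (x-1) t ∈ M ∨ ∃ t', (t' = t ∨ t' + 1 = t) ∧ vE x t' ∈ M := by
  obtain ⟨e, heM, hve⟩ := hcov (x, t) h
  obtain ⟨x', t', hsh⟩ := edge_shape hk1 (hsub heM)
  rcases hsh with rfl | rfl
  · rw [mem_hE] at hve
    simp only at hve
    rcases hve.2 with h' | h'
    · left
      rw [show x' = x by omega, show t' = t by omega] at heM
      exact heM
    · right; left
      rw [show x' = x - 1 by omega, show t' = t by omega] at heM
      exact heM
  · rw [mem_vE] at hve
    simp only at hve
    right; right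
    exact ⟨t', by omega, by rw [show x' = x by omega] at heM; exact heM⟩

end

section
variable {m : ℕ} {k : Fin m → ℕ} {K : ℤ → ℤ} {M : Set (Sym2 (ℤ × ℤ))}

set_option maxHeartbeats 1000000 in
lemma scanTop (hk1 : ∀ i, 1 ≤ k i) (hK : ∀ i : Fin m, K (i:ℤ) = (k i : ℤ))
    (hsub : M ⊆ (hexGraph (truncPar m k)).edgeSet)
    (hpw : M.Pairwise fun e f => ∀ v, v ∈ e → v ∉ f)
    (hcov : ∀ v ∈ hexVertexSet (truncPar m k), ∃ e ∈ M, v ∈ e)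
    (hm : 1 ≤ (m:ℤ)) :
    ∃ s : ℤ, 0 ≤ s ∧ s ≤ K 0 ∧ vE (2*s) 0 ∈ M ∧ (∀ x, vE x 0 ∈ M → x = 2*s) ∧
      (∀ x, hE x 1 ∈ M ↔ (0 ≤ x ∧ x + 1 ≤ 2*K 0 ∧
        ((x < 2*s ∧ x % 2 = 0) ∨ (2*s < x ∧ (x - 2*s) % 2 = 1)))) := by
  obtain ⟨i0, hi0⟩ := toFin (m := m) (r := 0) le_rfl (by omega)
  have hKi0 := hK i0
  have hki0 := hk1 i0
  rw [hi0] at hKi0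
  have hK01 : 1 ≤ K 0 := by omega
  have hres := pathScan (fun x => hE x 1 ∈ M) (fun x => vE x 1 ∈ M ∨ vE x 0 ∈ M)
    0 (2*K 0)
    (by -- hPr
      intro x h
      obtain ⟨r, hr, h0, h1, h2, h3⟩ := prange hk1 hK hsub h
      have hr0 : r = 0 := by omega
      subst hr0
      omega)
    (by -- hdr
      rintro x (h | h)
      · obtain ⟨r, s, hr, h0, -⟩ := dcand hk1 hK hsub h
        omega
      · obtain ⟨r, s, hr, h0, h1, h2, h3, h4⟩ := dcand hk1 hK hsub h
        have hr0 : r = 0 := by omega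
        subst hr0
        omega)
    (by -- hone
      intro x h0x hxR
      have hvA : ((x, 1) : ℤ × ℤ) ∈ hexVertexSet (truncPar m k) := by
        rw [mem_vertexSet m k hk1]
        refine ⟨i0, ?_, ?_, ?_⟩ <;> simp only <;> omega
      rcases cover_shape hk1 hsub hcov hvA with h | h | ⟨t', ht', hv⟩
      · exact Or.inl h
      · exact Or.inr (Or.inl h)
      · rcases ht' with ht' | ht'
        · subst ht'; exact Or.inr (Or.inr (Or.inl hv))
        · have h'' : t' = 0 := by omega
          subst h''; exact Or.inr (Or.inr (Or.inr hv)))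
    (by -- he1
      intro x h h'
      exact absurd h' (fun hh => he1' hpw h hh))
    (by -- he2
      rintro x h (h' | h')
      · exact he2' hpw h (Or.inl rfl) h'
      · exact he2' hpw h (Or.inr (by omega)) h')
    (by -- he3
      rintro x h (h' | h')
      · exact he3' hpw h (Or.inl rfl) h'
      · exact he3' hpw h (Or.inr (by omega)) h')
    (by -- hno3
      rintro w1 w2 w3 (h1 | h1) (h2 | h2) (h3 | h3) hlt1 hlt2 hp1 hp2 hp3 <;>
        [skip; skip; skip; skip; skip; skip; skip; skip] <;>
        first
        | (obtain ⟨r, s, hr, h0, -⟩ := dcand hk1 hK hsub h1; omega)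
        | (obtain ⟨r, s, hr, h0, -⟩ := dcand hk1 hK hsub h2; omega)
        | (obtain ⟨ra, sa, hra, h0a, h1a, h2a, h3a, h4a⟩ := dcand hk1 hK hsub h1
           obtain ⟨rb, sb, hrb, h0b, h1b, h2b, h3b, h4b⟩ := dcand hk1 hK hsub h2
           omega))
    (by omega)
  rcases hres with ⟨hnd, hpar, -⟩ | ⟨p, hdp, hpe, hRe, huni, hPf⟩ |
    ⟨p, q, hdp, hdq, hpq, hpe, hqo, hRe, -, -⟩
  · omega
  · rcases hdp with h | h
    · obtain ⟨r, s, hr, h0, -⟩ := dcand hk1 hK hsub h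
      omega
    · obtain ⟨r, s, hr, h0, h1, h2, h3, h4⟩ := dcand hk1 hK hsub h
      have hr0 : r = 0 := by omega
      subst hr0
      refine ⟨s, by omega, by omega, ?_, ?_, ?_⟩
      · rw [show 2*s = p by omega]; exact h
      · intro x hx
        have := huni x (Or.inr hx)
        omega
      · intro x
        rw [hPf x]
        omega
  · exfalso
    have hform : ∀ w, (vE w 1 ∈ M ∨ vE w 0 ∈ M) → ∃ s : ℤ, w = 2*s := by
      rintro w (h | h)
      · obtain ⟨r, s, hr, h0, -⟩ := dcand hk1 hK hsub h
        omega
      · obtain ⟨r, s, hr, h0, h1, h2, h3, h4⟩ := dcand hk1 hK hsub h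
        exact ⟨s, by omega⟩
    obtain ⟨sa, ha⟩ := hform p hdp
    obtain ⟨sb, hb⟩ := hform q hdq
    omega

end

section
variable {m : ℕ} {k : Fin m → ℕ} {K : ℤ → ℤ} {M : Set (Sym2 (ℤ × ℤ))}

set_option maxHeartbeats 1000000 in
lemma scanInt (hk1 : ∀ i, 1 ≤ k i) (hK : ∀ i : Fin m, K (i:ℤ) = (k i : ℤ))
    (hsub : M ⊆ (hexGraph (truncPar m k)).edgeSet)
    (hpw : M.Pairwise fun e f => ∀ v, v ∈ e → v ∉ f)
    (hcov : ∀ v ∈ hexVertexSet (truncPar m k), ∃ e ∈ M, v ∈ e)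
    {r ar : ℤ} (hr0 : 0 ≤ r) (hr1 : r + 1 < (m:ℤ)) (hKm : K r ≤ K (r+1))
    (har0 : 0 ≤ ar) (har1 : ar ≤ K r)
    (hvr : vE (r + 2*ar) (-r) ∈ M)
    (huniq : ∀ x, vE x (-r) ∈ M → x = r + 2*ar) :
    ∃ s : ℤ, 0 ≤ s ∧ s ≤ K (r+1) ∧ ar ≤ s ∧ vE ((r+1) + 2*s) (-(r+1)) ∈ M ∧
      (∀ x, vE x (-(r+1)) ∈ M → x = (r+1) + 2*s) ∧
      (∀ x, hE x (-r) ∈ M ↔ (r ≤ x ∧ x + 1 ≤ (r+1) + 2*K (r+1) ∧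
        ((x < r + 2*ar ∧ (x - r) % 2 = 0) ∨
         (r + 2*ar < x ∧ x < (r+1) + 2*s ∧ (x - (r + 2*ar)) % 2 = 1) ∨
         ((r+1) + 2*s < x ∧ (x - ((r+1) + 2*s)) % 2 = 1)))) := by
  obtain ⟨i0, hi0⟩ := toFin (m := m) hr0 (by omega)
  have hKi0 := hK i0
  have hki0 := hk1 i0
  rw [hi0] at hKi0
  have hKr1 : 1 ≤ K r := by omega
  have hres := pathScan (fun x => hE x (-r) ∈ M)
    (fun x => vE x (-r) ∈ M ∨ vE x (-r - 1) ∈ M)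
    r ((r+1) + 2*K (r+1))
    (by -- hPr
      intro x h
      obtain ⟨r', hr', h0, h1, h2, h3⟩ := prange hk1 hK hsub h
      rcases (by omega : r' = r ∨ r' = r + 1) with hh | hh <;> subst hh <;> omega)
    (by -- hdr
      rintro x (h | h)
      · have := huniq x h
        omega
      · obtain ⟨r', s, hr', h0, h1, h2, h3, h4⟩ := dcand hk1 hK hsub h
        have hh : r' = r + 1 := by omega
        subst hh
        omega)
    (by -- hone
      intro x h0x hxR
      have hvA : ((x, -r) : ℤ × ℤ) ∈ hexVertexSet (truncPar m k) := by
        rw [mem_vertexSet m k hk1]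
        by_cases hc : x ≤ r + 2*K r
        · refine ⟨i0, ?_, ?_, ?_⟩ <;> simp only <;> omega
        · obtain ⟨i1, hi1⟩ := toFin (m := m) (r := r + 1) (by omega) (by omega)
          have hKi1 := hK i1
          rw [hi1] at hKi1
          refine ⟨i1, ?_, ?_, ?_⟩ <;> simp only <;> omega
      rcases cover_shape hk1 hsub hcov hvA with h | h | ⟨t', ht', hv⟩
      · exact Or.inl h
      · exact Or.inr (Or.inl h)
      · rcases ht' with ht' | ht'
        · subst ht'; exact Or.inr (Or.inr (Or.inl hv))
        · have h'' : t' = -r - 1 := by omega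
          subst h''; exact Or.inr (Or.inr (Or.inr hv)))
    (by -- he1
      intro x h h'
      exact absurd h' (fun hh => he1' hpw h hh))
    (by -- he2
      rintro x h (h' | h')
      · exact he2' hpw h (Or.inl rfl) h'
      · exact he2' hpw h (Or.inr (by omega)) h')
    (by -- he3
      rintro x h (h' | h')
      · exact he3' hpw h (Or.inl rfl) h'
      · exact he3' hpw h (Or.inr (by omega)) h')
    (by -- hno3
      have hform : ∀ w, (vE w (-r) ∈ M ∨ vE w (-r - 1) ∈ M) →
          w = r + 2*ar ∨ ∃ s : ℤ, w = r + 1 + 2*s := by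
        rintro w (h | h)
        · exact Or.inl (huniq w h)
        · obtain ⟨r', s, hr', h0, h1, h2, h3, h4⟩ := dcand hk1 hK hsub h
          exact Or.inr ⟨s, by omega⟩
      rintro w1 w2 w3 h1 h2 h3 hlt1 hlt2 hp1 hp2 hp3
      rcases hform w1 h1 with hf1 | ⟨s1, hf1⟩ <;>
        rcases hform w3 h3 with hf3 | ⟨s3, hf3⟩ <;> omega)
    (by omega)
  rcases hres with ⟨hnd, -, -⟩ | ⟨p, hdp, hpe, hRe, -, -⟩ |
    ⟨p, q, hdp, hdq, hpq, hpe, hqo, hRe, huni, hPf⟩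
  · exact absurd (Or.inl hvr) (hnd (r + 2*ar))
  · exfalso
    rcases hdp with h | h
    · have := huniq p h
      omega
    · obtain ⟨r', s, hr', h0, h1, h2, h3, h4⟩ := dcand hk1 hK hsub h
      omega
  · -- main case
    have hp : p = r + 2*ar := by
      rcases hdp with h | h
      · exact huniq p h
      · obtain ⟨r', s, hr', h0, h1, h2, h3, h4⟩ := dcand hk1 hK hsub h
        omega
    have hq : ∃ s : ℤ, 0 ≤ s ∧ s ≤ K (r+1) ∧ q = r + 1 + 2*s ∧ vE q (-r - 1) ∈ M := by
      rcases hdq with h | h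
      · have := huniq q h
        omega
      · obtain ⟨r', s, hr', h0, h1, h2, h3, h4⟩ := dcand hk1 hK hsub h
        have hh : r' = r + 1 := by omega
        subst hh
        exact ⟨s, by omega, by omega, by omega, h⟩
    obtain ⟨s, hs0, hs1, hqs, hqM⟩ := hq
    refine ⟨s, hs0, hs1, by omega, ?_, ?_, ?_⟩
    · rw [show (r:ℤ)+1+2*s = q by omega, show -(r+1) = -r - 1 by ring]
      exact hqM
    · intro x hx
      rw [show -(r+1) = -r - 1 by ring] at hx
      have hx' := huni x (Or.inr hx)
      obtain ⟨r', s', hr', h0, h1, h2, h3, h4⟩ := dcand hk1 hK hsub hx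
      omega
    · intro x
      rw [hPf x]
      omega

set_option maxHeartbeats 1000000 in
lemma scanBot (hk1 : ∀ i, 1 ≤ k i) (hK : ∀ i : Fin m, K (i:ℤ) = (k i : ℤ))
    (hsub : M ⊆ (hexGraph (truncPar m k)).edgeSet)
    (hpw : M.Pairwise fun e f => ∀ v, v ∈ e → v ∉ f)
    (hcov : ∀ v ∈ hexVertexSet (truncPar m k), ∃ e ∈ M, v ∈ e)
    {r ar : ℤ} (hr0 : 0 ≤ r) (hr1 : r + 1 = (m:ℤ))
    (har0 : 0 ≤ ar) (har1 : ar ≤ K r)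
    (hvr : vE (r + 2*ar) (-r) ∈ M)
    (huniq : ∀ x, vE x (-r) ∈ M → x = r + 2*ar) :
    ∀ x, hE x (-r) ∈ M ↔ (r ≤ x ∧ x + 1 ≤ r + 2*K r ∧
        ((x < r + 2*ar ∧ (x - r) % 2 = 0) ∨
         (r + 2*ar < x ∧ (x - (r + 2*ar)) % 2 = 1))) := by
  obtain ⟨i0, hi0⟩ := toFin (m := m) hr0 (by omega)
  have hKi0 := hK i0
  have hki0 := hk1 i0
  rw [hi0] at hKi0
  have hKr1 : 1 ≤ K r := by omega
  have hnd1 : ∀ x, ¬ vE x (-r - 1) ∈ M := by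
    intro x h
    obtain ⟨r', s, hr', h0, h1, h2, h3, h4⟩ := dcand hk1 hK hsub h
    omega
  have hres := pathScan (fun x => hE x (-r) ∈ M)
    (fun x => vE x (-r) ∈ M ∨ vE x (-r - 1) ∈ M)
    r (r + 2*K r)
    (by -- hPr
      intro x h
      obtain ⟨r', hr', h0, h1, h2, h3⟩ := prange hk1 hK hsub h
      have hh : r' = r := by omega
      subst hh
      omega)
    (by -- hdr
      rintro x (h | h)
      · have := huniq x h
        omega
      · exact absurd h (hnd1 x))
    (by -- hone
      intro x h0x hxR
      have hvA : ((x, -r) : ℤ × ℤ) ∈ hexVertexSet (truncPar m k) := by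
        rw [mem_vertexSet m k hk1]
        refine ⟨i0, ?_, ?_, ?_⟩ <;> simp only <;> omega
      rcases cover_shape hk1 hsub hcov hvA with h | h | ⟨t', ht', hv⟩
      · exact Or.inl h
      · exact Or.inr (Or.inl h)
      · rcases ht' with ht' | ht'
        · subst ht'; exact Or.inr (Or.inr (Or.inl hv))
        · have h'' : t' = -r - 1 := by omega
          subst h''; exact Or.inr (Or.inr (Or.inr hv)))
    (by -- he1
      intro x h h'
      exact absurd h' (fun hh => he1' hpw h hh))
    (by -- he2
      rintro x h (h' | h')
      · exact he2' hpw h (Or.inl rfl) h'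
      · exact he2' hpw h (Or.inr (by omega)) h')
    (by -- he3
      rintro x h (h' | h')
      · exact he3' hpw h (Or.inl rfl) h'
      · exact he3' hpw h (Or.inr (by omega)) h')
    (by -- hno3
      rintro w1 w2 w3 h1 h2 h3 hlt1 hlt2 hp1 hp2 hp3
      have hf1 : w1 = r + 2*ar := by
        rcases h1 with h | h
        · exact huniq w1 h
        · exact absurd h (hnd1 w1)
      have hf2 : w2 = r + 2*ar := by
        rcases h2 with h | h
        · exact huniq w2 h
        · exact absurd h (hnd1 w2)
      omega)
    (by omega)
  rcases hres with ⟨hnd, -, -⟩ | ⟨p, hdp, hpe, hRe, huni, hPf⟩ |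
    ⟨p, q, hdp, hdq, hpq, hpe, hqo, hRe, -, -⟩
  · exact absurd (Or.inl hvr) (hnd (r + 2*ar))
  · have hp : p = r + 2*ar := by
      rcases hdp with h | h
      · exact huniq p h
      · exact absurd h (hnd1 p)
    intro x
    rw [hPf x]
    omega
  · exfalso
    have hp : p = r + 2*ar := by
      rcases hdp with h | h
      · exact huniq p h
      · exact absurd h (hnd1 p)
    have hq : q = r + 2*ar := by
      rcases hdq with h | h
      · exact huniq q h
      · exact absurd h (hnd1 q)
    omega

end

section
variable {m : ℕ} {k : Fin m → ℕ} {K : ℤ → ℤ} {M : Set (Sym2 (ℤ × ℤ))}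

set_option maxHeartbeats 2000000 in
lemma decode (hk1 : ∀ i, 1 ≤ k i) (hK : ∀ i : Fin m, K (i:ℤ) = (k i : ℤ))
    (hKm : ∀ r : ℤ, 0 ≤ r → r + 1 < (m:ℤ) → K r ≤ K (r+1))
    (hPM : IsPMOn (hexGraph (truncPar m k)) (hexVertexSet (truncPar m k)) M) :
    ∃ A : ℤ → ℤ, (∀ r, 0 ≤ r → r < (m:ℤ) → 0 ≤ A r ∧ A r ≤ K r) ∧
      (∀ r, 0 ≤ r → r + 1 < (m:ℤ) → A r ≤ A (r+1)) ∧ M = Phi m K A := by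
  obtain ⟨hsub, hmem, hpw, hcov⟩ := hPM
  by_cases hm : 1 ≤ (m:ℤ)
  swap
  · -- m = 0 : both sides empty
    refine ⟨fun _ => 0, fun r h0 h1 => (by omega : False).elim, fun r h0 h1 => (by omega : False).elim, ?_⟩
    ext e
    constructor
    · intro he
      obtain ⟨x, t, hsh | hsh⟩ := edge_shape hk1 (hsub he)
      · subst hsh
        obtain ⟨r, -, h0, h1, -⟩ := prange hk1 hK hsub he
        omega
      · subst hsh
        obtain ⟨r, s, -, h0, h1, -⟩ := dcand hk1 hK hsub he
        omega
    · rintro (⟨r, h0, h1, -⟩ | ⟨t, x, hf, -⟩)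
      · omega
      · rw [Hform, HformTop, HformInt, HformBot] at hf
        omega
  · -- main case
    have hrec : ∀ n : ℕ, ∀ r : ℤ, r = (n:ℤ) → r < (m:ℤ) → ∃ s : ℤ, 0 ≤ s ∧ s ≤ K r ∧
        vE (r + 2*s) (-r) ∈ M ∧ (∀ x, vE x (-r) ∈ M → x = r + 2*s) := by
      intro n
      induction n with
      | zero =>
        intro r hr _
        have hr0 : r = 0 := by exact_mod_cast hr
        subst hr0
        obtain ⟨s, h0, h1, h2, h3, -⟩ := scanTop hk1 hK hsub hpw hcov hm
        refine ⟨s, h0, h1, ?_, ?_⟩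
        · rw [show (0:ℤ) + 2*s = 2*s by ring, show -(0:ℤ) = 0 by ring]
          exact h2
        · intro x hx
          rw [show -(0:ℤ) = 0 by ring] at hx
          have := h3 x hx
          omega
      | succ n ih =>
        intro r hr hrm
        have hn : (r - 1 : ℤ) = (n:ℤ) := by push_cast at hr ⊢; omega
        obtain ⟨s, h0, h1, h2, h3⟩ := ih (r-1) hn (by omega)
        obtain ⟨s', h0', h1', h2', h3', h4', -⟩ := scanInt hk1 hK hsub hpw hcov
          (by omega : (0:ℤ) ≤ r - 1) (by omega)
          (hKm (r-1) (by omega) (by omega)) h0 h1 h2 h3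
        rw [show (r:ℤ) - 1 + 1 = r by ring] at h1' h3' h4'
        exact ⟨s', h0', h1', h3', h4'⟩
    choose f hf using hrec
    refine ⟨fun r => if h : 0 ≤ r ∧ r < (m:ℤ) then f r.toNat r (by omega) (by omega) else 0, ?_⟩
    set A : ℤ → ℤ := fun r =>
      if h : 0 ≤ r ∧ r < (m:ℤ) then f r.toNat r (by omega) (by omega) else 0 with hA
    have hper : ∀ r : ℤ, 0 ≤ r → r < (m:ℤ) → (0 ≤ A r ∧ A r ≤ K r) ∧
        vE (r + 2*A r) (-r) ∈ M ∧ (∀ x, vE x (-r) ∈ M → x = r + 2*A r) := by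
      intro r h0 h1
      have hval : A r = f r.toNat r (by omega) (by omega) := by
        rw [hA]
        exact dif_pos ⟨h0, h1⟩
      obtain ⟨g0, g1, g2, g3⟩ := hf r.toNat r (by omega) (by omega)
      rw [hval]
      exact ⟨⟨g0, g1⟩, g2, g3⟩
    have hmono : ∀ r, 0 ≤ r → r + 1 < (m:ℤ) → A r ≤ A (r+1) := by
      intro r h0 h1
      obtain ⟨⟨g0, g1⟩, g2, g3⟩ := hper r h0 (by omega)
      obtain ⟨s', h0', h1', h2', h3', h4', -⟩ := scanInt hk1 hK hsub hpw hcov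
        h0 h1 (hKm r h0 h1) g0 g1 g2 g3
      obtain ⟨-, g2', -⟩ := hper (r+1) (by omega) (by omega)
      have := h4' ((r+1) + 2*A (r+1)) g2'
      omega
    -- level iff lemmas
    have topIff : ∀ x, hE x 1 ∈ M ↔ (0 ≤ x ∧ x + 1 ≤ 2*K 0 ∧
        ((x < 2*A 0 ∧ x % 2 = 0) ∨ (2*A 0 < x ∧ (x - 2*A 0) % 2 = 1))) := by
      obtain ⟨s, h0, h1, h2, h3, h4⟩ := scanTop hk1 hK hsub hpw hcov hm
      obtain ⟨-, g2, g3⟩ := hper 0 le_rfl (by omega)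
      rw [show -(0:ℤ) = 0 by ring, show (0:ℤ) + 2*A 0 = 2*A 0 by ring] at g2 g3
      have hsA : s = A 0 := by have := g3 (2*s) h2; omega
      intro x
      rw [h4 x]
      omega
    have intIff : ∀ t, 2 - (m:ℤ) ≤ t → t ≤ 0 → ∀ x, hE x t ∈ M ↔
        (-t ≤ x ∧ x + 1 ≤ (1 - t) + 2*K (1 - t) ∧
          ((x < -t + 2*A (-t) ∧ (x + t) % 2 = 0) ∨
           (-t + 2*A (-t) < x ∧ x < (1 - t) + 2*A (1 - t) ∧
             (x - (-t + 2*A (-t))) % 2 = 1) ∨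
           ((1 - t) + 2*A (1 - t) < x ∧ (x - ((1 - t) + 2*A (1 - t))) % 2 = 1))) := by
      intro t hg1 hg2
      obtain ⟨⟨g0, g1⟩, g2, g3⟩ := hper (-t) (by omega) (by omega)
      obtain ⟨s', h0', h1', h2', h3', h4', h5'⟩ := scanInt hk1 hK hsub hpw hcov
        (by omega : (0:ℤ) ≤ -t) (by omega) (hKm (-t) (by omega) (by omega)) g0 g1 g2 g3
      rw [show -t + 1 = 1 - t by ring] at h1' h3' h4' h5'
      obtain ⟨-, g2', -⟩ := hper (1-t) (by omega) (by omega)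
      have hsA : s' = A (1-t) := by
        rw [show -(1-t) = t - 1 by ring] at g2'
        rw [show -(1 - t) = t - 1 by ring] at h4'
        have := h4' ((1-t) + 2*A (1-t)) g2'
        omega
      rw [show -(-t) = t by ring] at h5'
      intro x
      rw [h5' x]
      omega
    have botIff : ∀ x, hE x (1 - (m:ℤ)) ∈ M ↔ ((m:ℤ) - 1 ≤ x ∧
        x + 1 ≤ ((m:ℤ) - 1) + 2*K ((m:ℤ) - 1) ∧
        ((x < ((m:ℤ) - 1) + 2*A ((m:ℤ) - 1) ∧ (x - ((m:ℤ) - 1)) % 2 = 0) ∨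
         (((m:ℤ) - 1) + 2*A ((m:ℤ) - 1) < x ∧
           (x - (((m:ℤ) - 1) + 2*A ((m:ℤ) - 1))) % 2 = 1))) := by
      obtain ⟨⟨g0, g1⟩, g2, g3⟩ := hper ((m:ℤ) - 1) (by omega) (by omega)
      have hb := scanBot hk1 hK hsub hpw hcov (by omega : (0:ℤ) ≤ (m:ℤ) - 1)
        (by ring) g0 g1 g2 g3
      intro x
      rw [show (1:ℤ) - (m:ℤ) = -((m:ℤ) - 1) by ring]
      rw [hb x]
    refine ⟨?_, hmono, ?_⟩
    · intro r h0 h1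
      exact (hper r h0 h1).1
    · -- M = Phi m K A
      ext e
      constructor
      · intro he
        obtain ⟨x, t, hsh | hsh⟩ := edge_shape hk1 (hsub he)
        · -- horizontal edge
          subst hsh
          obtain ⟨r', hr', h0, h1, h2, h3⟩ := prange hk1 hK hsub he
          by_cases ht1 : t = 1
          · subst ht1
            have hx := (topIff x).mp he
            refine Or.inr ⟨1, x, Or.inl ?_, rfl⟩
            rw [HformTop]
            omega
          · by_cases htb : t = 1 - (m:ℤ)
            · subst htb
              have hx := (botIff x).mp he
              refine Or.inr ⟨1 - (m:ℤ), x, Or.inr (Or.inr ?_), rfl⟩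
              rw [HformBot]
              omega
            · have hg1 : 2 - (m:ℤ) ≤ t := by omega
              have hg2 : t ≤ 0 := by omega
              have hx := (intIff t hg1 hg2 x).mp he
              refine Or.inr ⟨t, x, Or.inr (Or.inl ?_), rfl⟩
              rw [HformInt]
              omega
        · -- vertical edge
          subst hsh
          obtain ⟨r', s', hr', h0, h1, h2, h3, h4⟩ := dcand hk1 hK hsub he
          obtain ⟨-, -, g3⟩ := hper (-t) (by omega) (by omega)
          have hp := g3
          rw [show -(-t) = t by ring] at hp
          have hx := hp x he
          exact Or.inl ⟨-t, by omega, by omega, vE_congr (by omega) (by ring)⟩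
      · rintro (⟨r, h0, h1, rfl⟩ | ⟨t, x, hf, rfl⟩)
        · obtain ⟨-, g2, -⟩ := hper r h0 h1
          exact g2
        · rcases hf with hf | hf | hf
          · rw [HformTop] at hf
            rw [show t = 1 by omega]
            rw [topIff x]
            omega
          · rw [HformInt] at hf
            rw [intIff t (by omega) (by omega) x]
            omega
          · rw [HformBot] at hf
            rw [show t = 1 - (m:ℤ) by omega]
            rw [botIff x]
            omega

end

def lifti (m : ℕ) (g : Fin m → ℕ) : ℤ → ℤ :=
  fun r => if h : 0 ≤ r ∧ r < (m:ℤ) then (g ⟨r.toNat, by omega⟩ : ℤ) else 0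

lemma lifti_coe {m : ℕ} (g : Fin m → ℕ) (i : Fin m) : lifti m g (i:ℤ) = (g i : ℤ) := by
  have h : (0:ℤ) ≤ (i:ℤ) ∧ ((i:ℤ)) < (m:ℤ) := ⟨by positivity, by exact_mod_cast i.isLt⟩
  rw [lifti, dif_pos h]
  have hfin : (⟨((i:ℤ)).toNat, by omega⟩ : Fin m) = i := by
    ext
    simp
  rw [hfin]

lemma lifti_spec {m : ℕ} (g : Fin m → ℕ) (r : ℤ) (h0 : 0 ≤ r) (h1 : r < (m:ℤ)) :
    ∃ i : Fin m, (i:ℤ) = r ∧ lifti m g r = (g i : ℤ) := by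
  obtain ⟨i, hi⟩ := toFin (m := m) h0 h1
  exact ⟨i, hi, by rw [← hi, lifti_coe]⟩

lemma Phi_congr {m : ℕ} {K A A' : ℤ → ℤ}
    (h : ∀ r, 0 ≤ r → r < (m:ℤ) → A r = A' r) : Phi m K A = Phi m K A' := by
  have main : ∀ (B B' : ℤ → ℤ), (∀ r, 0 ≤ r → r < (m:ℤ) → B r = B' r) →
      Phi m K B ⊆ Phi m K B' := by
    intro B B' hBB
    rintro e (⟨r, h0, h1, rfl⟩ | ⟨t, x, hf, rfl⟩)
    · exact Or.inl ⟨r, h0, h1, vE_congr (by rw [hBB r h0 h1]) rfl⟩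
    · refine Or.inr ⟨t, x, ?_, rfl⟩
      rcases hf with hf | hf | hf
      · refine Or.inl ?_
        rw [HformTop] at hf ⊢
        have := hBB 0 le_rfl (by omega)
        omega
      · refine Or.inr (Or.inl ?_)
        rw [HformInt] at hf ⊢
        have h1 := hBB (-t) (by omega) (by omega)
        have h2 := hBB (1-t) (by omega) (by omega)
        omega
      · refine Or.inr (Or.inr ?_)
        rw [HformBot] at hf ⊢
        have := hBB ((m:ℤ)-1) (by omega) (by omega)
        omega
  exact Set.Subset.antisymm (main A A' h) (main A' A (fun r h0 h1 => (h r h0 h1).symm))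

/-- The number of perfect matchings of the truncated parallelogram equals the

number of non-decreasing sequences `(a_1,…,a_m)` with `0 ≤ a_i ≤ k_i`. -/
theorem truncPar_pm_count (m : ℕ) (k : Fin m → ℕ)
    (hk1 : ∀ i, 1 ≤ k i) (hmono : Monotone k) :
    {M : Set (Sym2 (ℤ × ℤ)) | hexPM (truncPar m k) M}.ncard =
      {a : Fin m → ℕ | Monotone a ∧ ∀ i, a i ≤ k i}.ncard := by
  classical
  set S : Set (Fin m → ℕ) := {a | Monotone a ∧ ∀ i, a i ≤ k i} with hS
  set F : (Fin m → ℕ) → Set (Sym2 (ℤ × ℤ)) := fun a => Phi m (lifti m k) (lifti m a) with hF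
  have hKco : ∀ i : Fin m, lifti m k (i:ℤ) = (k i : ℤ) := lifti_coe k
  have himg : F '' S = {M : Set (Sym2 (ℤ × ℤ)) | hexPM (truncPar m k) M} := by
    ext M
    constructor
    · rintro ⟨a, ⟨hmo, hle⟩, rfl⟩
      show IsPMOn _ _ _
      refine phi_PM hk1 hKco ?_ ?_
      · intro r h0 h1
        obtain ⟨i, hi, hgi⟩ := lifti_spec a r h0 h1
        obtain ⟨i', hi', hgi'⟩ := lifti_spec k r h0 h1
        have hii : i = i' := by
          ext
          omega
        subst hii
        have h1 := hle i
        have h2 := hk1 i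
        omega
      · intro r r' h0 hr' h1
        obtain ⟨i, hi, hgi⟩ := lifti_spec a r h0 (by omega)
        obtain ⟨i2, hi2, hgi2⟩ := lifti_spec a r' (by omega) (by omega)
        obtain ⟨j, hj, hgj⟩ := lifti_spec k r h0 (by omega)
        obtain ⟨j2, hj2, hgj2⟩ := lifti_spec k r' (by omega) (by omega)
        have hij : i = j := by ext; omega
        have hij2 : i2 = j2 := by ext; omega
        have hle12 : i ≤ i2 := by
          rw [Fin.le_def]
          omega
        have hm1 := hmono (hij ▸ hij2 ▸ hle12)
        have hm2 := hmo hle12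
        constructor
        · rw [hgj, hgj2]
          exact_mod_cast hm1
        · rw [hgi, hgi2]
          exact_mod_cast hm2
    · intro hM
      obtain ⟨A, hb, hmo, rfl⟩ := decode hk1 hKco
        (by
          intro r h0 h1
          obtain ⟨j, hj, hgj⟩ := lifti_spec k r h0 (by omega)
          obtain ⟨j2, hj2, hgj2⟩ := lifti_spec k (r+1) (by omega) (by omega)
          have hle12 : j ≤ j2 := by rw [Fin.le_def]; omega
          have := hmono hle12
          rw [hgj, hgj2]
          exact_mod_cast this) hM
      refine ⟨fun i => (A (i:ℤ)).toNat, ⟨?_, ?_⟩, ?_⟩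
      · -- monotone
        have hchain : ∀ d : ℕ, ∀ s t : ℤ, 0 ≤ s → t = s + d → t < (m:ℤ) → A s ≤ A t := by
          intro d
          induction d with
          | zero =>
            intro s t h0 ht h1
            have hts : t = s := by push_cast at ht; omega
            subst hts
            exact le_rfl
          | succ d ih =>
            intro s t h0 ht h1
            have hst : t = s + (d:ℤ) + 1 := by push_cast at ht ⊢; omega
            subst hst
            have h2 := ih s (s + (d:ℤ)) h0 rfl (by omega)
            have h3 := hmo (s + (d:ℤ)) (by omega) (by omega)
            omega
        intro i j hij
        have hb1 := hb (i:ℤ) (by positivity) (by exact_mod_cast i.isLt)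
        have hb2 := hb (j:ℤ) (by positivity) (by exact_mod_cast j.isLt)
        have hc : A (i:ℤ) ≤ A (j:ℤ) := by
          refine hchain (j.val - i.val) (i:ℤ) (j:ℤ) (by positivity) ?_ (by exact_mod_cast j.isLt)
          have : i.val ≤ j.val := hij
          push_cast
          omega
        simp only
        omega
      · -- bounded
        intro i
        have hb1 := hb (i:ℤ) (by positivity) (by exact_mod_cast i.isLt)
        have := hKco i
        simp only
        omega
      · -- F a = Phi m K A
        rw [hF]
        simp only
        refine Phi_congr ?_
        intro r h0 h1
        obtain ⟨i, hi, hgi⟩ := lifti_spec (fun i => (A (i:ℤ)).toNat) r h0 h1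
        have hb1 := hb r h0 h1
        rw [hgi, hi] at *
        omega
  have hinj : Set.InjOn F S := by
    intro a ha a' ha' heq
    funext i
    have hi0 : (0:ℤ) ≤ (i:ℤ) := by positivity
    have hi1 : ((i:ℤ)) < (m:ℤ) := by exact_mod_cast i.isLt
    have hmem : vE ((i:ℤ) + 2 * lifti m a (i:ℤ)) (-(i:ℤ)) ∈ F a :=
      Or.inl ⟨(i:ℤ), hi0, hi1, rfl⟩
    rw [heq] at hmem
    rcases hmem with ⟨r', h0', h1', hveq⟩ | ⟨t, x, -, hveq⟩
    · obtain ⟨h1, h2⟩ := vE_inj hveq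
      have hr' : r' = (i:ℤ) := by omega
      subst hr'
      rw [lifti_coe, lifti_coe] at h1
      omega
    · exact absurd hveq (vE_ne_hE _ _ _ _)
  rw [← himg, Set.ncard_image_of_injOn hinj]
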